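/- Let 𝔇 ≥ 1 be an integer, p an odd prime not dividing 𝔇 such that −𝔇 is NOT a square modulo p, and x, y, n integers with p | n. Then the number of quadruples (c₁, c₂, d₁, d₂) ∈ (ℤ/pℤ)⁴ whose associated pair (c, d) in R = ℤ[√−𝔇]/(p) is unimodular and which satisfy A·x² + B·y² + C·x + D·y + E ≡ n (mod p) equals p³ + p² − p − 1 = (p + 1)(p² − 1); consequently this count divided by the total number p⁴ − 1 of unimodular pairs equals (p + 1)/(p² + 1). Here A = c₁² + 𝔇c₂², B = 𝔇A, C = 2(c₁d₁ + 𝔇c₂d₂), D = 2𝔇(c₁d₂ − c₂d₁), E = A + d₁² + 𝔇d₂². -/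

import Mathlib

/-- The ring `ℤ[√−𝔇]`, modelled as `ℤ[X]/(X² + 𝔇)`. -/
abbrev ZsqrtNeg (𝔇 : ℕ) : Type := AdjoinRoot ((Polynomial.X : Polynomial ℤ) ^ 2 + Polynomial.C (𝔇 : ℤ))

/-- The quotient ring `R = ℤ[√−𝔇]/(p)`. -/
abbrev Rmod (𝔇 p : ℕ) : Type := ZsqrtNeg 𝔇 ⧸ Ideal.span {(p : ZsqrtNeg 𝔇)}

/-- The image of `u + v√−𝔇` in `R = ℤ[√−𝔇]/(p)`. -/
noncomputable def toRmod (𝔇 p : ℕ) (u v : ℤ) : Rmod 𝔇 p :=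
  Ideal.Quotient.mk (Ideal.span {(p : ZsqrtNeg 𝔇)})
    ((u : ZsqrtNeg 𝔇) + (v : ZsqrtNeg 𝔇) * AdjoinRoot.root _)

/-- A quadruple `(c₁, c₂, d₁, d₂) ∈ (ℤ/pℤ)⁴` is unimodular if the associated pair
`(c₁ + c₂√−𝔇, d₁ + d₂√−𝔇)` in `R = ℤ[√−𝔇]/(p)` admits `a, b ∈ R` with `a·d − b·c = 1`. -/
def IsUnimodular (𝔇 p : ℕ) (v : ZMod p × ZMod p × ZMod p × ZMod p) : Prop :=
  ∃ a b : Rmod 𝔇 p,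
    a * toRmod 𝔇 p (v.2.2.1.val : ℤ) (v.2.2.2.val : ℤ)
      - b * toRmod 𝔇 p (v.1.val : ℤ) (v.2.1.val : ℤ) = 1

/-- The congruence `A x² + B y² + C x + D y + E = n` in `ℤ/pℤ` for the quadruple
`v = (c₁, c₂, d₁, d₂)`. -/
def QuadCongr (𝔇 p : ℕ) (x y n : ℤ) (v : ZMod p × ZMod p × ZMod p × ZMod p) : Prop :=
  (v.1 ^ 2 + (𝔇 : ZMod p) * v.2.1 ^ 2) * (x : ZMod p) ^ 2
    + ((𝔇 : ZMod p) * (v.1 ^ 2 + (𝔇 : ZMod p) * v.2.1 ^ 2)) * (y : ZMod p) ^ 2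
    + (2 * (v.1 * v.2.2.1 + (𝔇 : ZMod p) * v.2.1 * v.2.2.2)) * (x : ZMod p)
    + (2 * (𝔇 : ZMod p) * (v.1 * v.2.2.2 - v.2.1 * v.2.2.1)) * (y : ZMod p)
    + ((v.1 ^ 2 + (𝔇 : ZMod p) * v.2.1 ^ 2) + v.2.2.1 ^ 2 + (𝔇 : ZMod p) * v.2.2.2 ^ 2)
    = (n : ZMod p)



open Polynomial Finset

noncomputable abbrev gpoly (𝔇 p : ℕ) : Polynomial (ZMod p) :=
  X ^ 2 + C (𝔇 : ZMod p)

noncomputable abbrev FF (𝔇 p : ℕ) := AdjoinRoot (gpoly 𝔇 p)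

lemma aniso {p : ℕ} [Fact p.Prime] {𝔇 : ℕ} (hns : ¬ IsSquare (-(𝔇 : ZMod p)))
    {a b : ZMod p} (h : a ^ 2 + (𝔇 : ZMod p) * b ^ 2 = 0) : a = 0 ∧ b = 0 := by
  by_cases hb : b = 0
  · subst hb
    refine ⟨?_, rfl⟩
    have h2 : a ^ 2 = 0 := by linear_combination h
    exact pow_eq_zero_iff two_ne_zero |>.mp h2
  · exact absurd ⟨a * b⁻¹, by field_simp; linear_combination -h⟩ hns

lemma g_irred {p : ℕ} [Fact p.Prime] {𝔇 : ℕ} (hns : ¬ IsSquare (-(𝔇 : ZMod p))) :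
    Irreducible (gpoly 𝔇 p) := by
  have hm : (gpoly 𝔇 p).Monic := monic_X_pow_add_C _ two_ne_zero
  have hd : (gpoly 𝔇 p).natDegree = 2 := natDegree_X_pow_add_C
  by_contra hred
  obtain ⟨c₁, c₂, h0, h1⟩ := (hm.not_irreducible_iff_exists_add_mul_eq_coeff hd).mp hred
  have e0 : (gpoly 𝔇 p).coeff 0 = (𝔇 : ZMod p) := by simp [gpoly, coeff_X_pow]
  have e1 : (gpoly 𝔇 p).coeff 1 = 0 := by simp [gpoly, coeff_X_pow]
  rw [e0] at h0; rw [e1] at h1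
  exact hns ⟨c₁, by linear_combination -h0 + c₁ * h1⟩

lemma rsq (𝔇 p : ℕ) [Fact p.Prime] :
    (AdjoinRoot.root (gpoly 𝔇 p)) ^ 2 = -((𝔇 : ℕ) : FF 𝔇 p) := by
  have h := AdjoinRoot.mk_self (f := gpoly 𝔇 p)
  rw [gpoly, map_add, map_pow, AdjoinRoot.mk_X, AdjoinRoot.mk_C] at h
  rw [show ((AdjoinRoot.of (gpoly 𝔇 p)) ((𝔇 : ℕ) : ZMod p) : FF 𝔇 p) = ((𝔇 : ℕ) : FF 𝔇 p)
    from map_natCast _ _] at h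
  exact eq_neg_of_add_eq_zero_left h

section FieldFacts

variable {p 𝔇 : ℕ} [Fact p.Prime] [Fact (Irreducible (gpoly 𝔇 p))]

local notation "r" => AdjoinRoot.root (gpoly 𝔇 p)
local notation "of'" => AdjoinRoot.of (gpoly 𝔇 p)

lemma mul_conj (a b : ZMod p) :
    (of' a - of' b * r) * (of' a + of' b * r) = of' (a ^ 2 + (𝔇 : ZMod p) * b ^ 2) := by
  have h := rsq 𝔇 p
  simp only [map_add, map_mul, map_pow, map_natCast]
  linear_combination (-(of' b) ^ 2) * h

lemma emap_zero (hns : ¬ IsSquare (-(𝔇 : ZMod p))) {a b : ZMod p}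
    (h : of' a + of' b * r = 0) : a = 0 ∧ b = 0 := by
  have h2 : of' (a ^ 2 + (𝔇 : ZMod p) * b ^ 2) = 0 := by
    rw [← mul_conj, h, mul_zero]
  have h3 : a ^ 2 + (𝔇 : ZMod p) * b ^ 2 = 0 :=
    (map_eq_zero_iff _ (AdjoinRoot.of (gpoly 𝔇 p)).injective).mp h2
  exact aniso hns h3

lemma charP_FF : CharP (FF 𝔇 p) p :=
  charP_of_injective_algebraMap (algebraMap (ZMod p) (FF 𝔇 p)).injective p

lemma frob (hodd : Odd p) (hns : ¬ IsSquare (-(𝔇 : ZMod p))) (a b : ZMod p) :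
    (of' a + of' b * r) ^ (p + 1) = of' (a ^ 2 + (𝔇 : ZMod p) * b ^ 2) := by
  haveI := charP_FF (p := p) (𝔇 := 𝔇)
  have hD : (-(𝔇 : ZMod p)) ≠ 0 := by
    intro h0
    exact hns (h0 ▸ ⟨0, by simp⟩)
  have heul : (-(𝔇 : ZMod p)) ^ (p / 2) = -1 := by
    rcases ZMod.pow_div_two_eq_neg_one_or_one p hD with h | h
    · exact absurd ((ZMod.euler_criterion p hD).mpr h) hns
    · exact h
  obtain ⟨k, hk⟩ := hodd
  have hk2 : p / 2 = k := by omega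
  have hrp : r ^ p = -r := by
    calc r ^ p = r ^ (2 * k + 1) := congrArg (fun n => r ^ n) hk
    _ = (r ^ 2) ^ k * r := by ring
    _ = ((-((𝔇 : ℕ) : FF 𝔇 p))) ^ k * r := by rw [rsq]
    _ = (of' ((-(𝔇 : ZMod p)) ^ k)) * r := by
        rw [map_pow, map_neg, map_natCast]
    _ = -r := by rw [← hk2, heul]; simp
  have hwp : (of' a + of' b * r) ^ p = of' a - of' b * r := by
    rw [add_pow_char, mul_pow, ← map_pow, ← map_pow, ZMod.pow_card, ZMod.pow_card, hrp]
    ring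
  rw [pow_succ, hwp, mul_conj]

end FieldFacts

section Counting

variable {p 𝔇 : ℕ} [Fact p.Prime]

lemma card_nu_ne_zero (hns : ¬ IsSquare (-(𝔇 : ZMod p))) :
    (univ.filter fun d : ZMod p × ZMod p => d.1 ^ 2 + (𝔇 : ZMod p) * d.2 ^ 2 ≠ 0).card
      = p ^ 2 - 1 := by
  classical
  have key := Finset.card_filter_add_card_filter_not
    (s := (univ : Finset (ZMod p × ZMod p)))
    (p := fun d => d.1 ^ 2 + (𝔇 : ZMod p) * d.2 ^ 2 = 0)
  have h1 : (univ.filter fun d : ZMod p × ZMod p => d.1 ^ 2 + (𝔇 : ZMod p) * d.2 ^ 2 = 0)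
      = {((0 : ZMod p), (0 : ZMod p))} := by
    ext d
    simp only [Finset.mem_filter, Finset.mem_univ, true_and, Finset.mem_singleton]
    constructor
    · intro h
      obtain ⟨ha, hb⟩ := aniso hns h
      exact Prod.ext ha hb
    · rintro rfl; simp
  have h2 : (univ : Finset (ZMod p × ZMod p)).card = p ^ 2 := by
    simp [Finset.card_univ, ZMod.card, sq]
  rw [h1, Finset.card_singleton, h2] at key
  have : (univ.filter fun d : ZMod p × ZMod p => ¬(d.1 ^ 2 + (𝔇 : ZMod p) * d.2 ^ 2 = 0)).card
      = p ^ 2 - 1 := by omega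
  convert this using 2

lemma fiber_card [Fact (Irreducible (gpoly 𝔇 p))] (hodd : Odd p)
    (hns : ¬ IsSquare (-(𝔇 : ZMod p))) (t : ZMod p) (ht : t ≠ 0) :
    (univ.filter fun d : ZMod p × ZMod p => d.1 ^ 2 + (𝔇 : ZMod p) * d.2 ^ 2 = t).card
      = p + 1 := by
  classical
  set f : ZMod p → ℕ := fun s =>
    (univ.filter fun d : ZMod p × ZMod p => d.1 ^ 2 + (𝔇 : ZMod p) * d.2 ^ 2 = s).card with hf
  have hle : ∀ s ∈ univ.filter (fun s : ZMod p => s ≠ 0), f s ≤ p + 1 := by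
    intro s hs
    rw [Finset.mem_filter] at hs
    set P : Polynomial (FF 𝔇 p) :=
      Polynomial.X ^ (p + 1) - Polynomial.C (AdjoinRoot.of (gpoly 𝔇 p) s) with hP
    have hP0 : P ≠ 0 := X_pow_sub_C_ne_zero (by omega) _
    have step1 : f s ≤ P.roots.toFinset.card := by
      apply Finset.card_le_card_of_injOn
        (fun d : ZMod p × ZMod p =>
          AdjoinRoot.of (gpoly 𝔇 p) d.1 + AdjoinRoot.of (gpoly 𝔇 p) d.2 * AdjoinRoot.root _)
      · intro d hd
        rw [Finset.mem_coe, Finset.mem_filter] at hd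
        rw [Finset.mem_coe, Multiset.mem_toFinset, Polynomial.mem_roots hP0]
        simp only [P, Polynomial.IsRoot, Polynomial.eval_sub, Polynomial.eval_pow,
          Polynomial.eval_X, Polynomial.eval_C]
        rw [frob hodd hns, hd.2, sub_self]
      · intro d hd d' hd' h
        have hz : AdjoinRoot.of (gpoly 𝔇 p) (d.1 - d'.1)
            + AdjoinRoot.of (gpoly 𝔇 p) (d.2 - d'.2) * AdjoinRoot.root _ = 0 := by
          simp only [map_sub]
          linear_combination h
        obtain ⟨h1, h2⟩ := emap_zero hns hz
        exact Prod.ext (sub_eq_zero.mp h1) (sub_eq_zero.mp h2)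
    calc f s ≤ P.roots.toFinset.card := step1
    _ ≤ Multiset.card P.roots := Multiset.toFinset_card_le _
    _ ≤ P.natDegree := P.card_roots'
    _ = p + 1 := by rw [hP, natDegree_X_pow_sub_C]
  have hsum : ∑ s ∈ univ.filter (fun s : ZMod p => s ≠ 0), f s = p ^ 2 - 1 := by
    rw [← card_nu_ne_zero (p := p) (𝔇 := 𝔇) hns]
    rw [Finset.card_eq_sum_card_fiberwise
      (f := fun d : ZMod p × ZMod p => d.1 ^ 2 + (𝔇 : ZMod p) * d.2 ^ 2)
      (t := univ.filter (fun s : ZMod p => s ≠ 0))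
      (by intro d hd; rw [Finset.mem_coe, Finset.mem_filter] at hd ⊢; exact ⟨Finset.mem_univ _, hd.2⟩)]
    apply Finset.sum_congr rfl
    intro s hs
    rw [Finset.mem_filter] at hs
    have heq : (univ.filter fun a : ZMod p × ZMod p =>
        a.1 ^ 2 + (𝔇 : ZMod p) * a.2 ^ 2 ≠ 0 ∧ a.1 ^ 2 + (𝔇 : ZMod p) * a.2 ^ 2 = s)
        = univ.filter fun d : ZMod p × ZMod p => d.1 ^ 2 + (𝔇 : ZMod p) * d.2 ^ 2 = s := by
      ext d
      simp only [Finset.mem_filter, Finset.mem_univ, true_and]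
      constructor
      · rintro ⟨_, h⟩; exact h
      · intro h; exact ⟨by rw [h]; exact hs.2, h⟩
    rw [Finset.filter_filter, heq, hf]
  have hmem : t ∈ univ.filter (fun s : ZMod p => s ≠ 0) := by
    rw [Finset.mem_filter]; exact ⟨Finset.mem_univ _, ht⟩
  by_contra hne
  have hlt : f t < p + 1 := lt_of_le_of_ne (hle t hmem) hne
  have hstrict : ∑ s ∈ univ.filter (fun s : ZMod p => s ≠ 0), f s
      < ∑ s ∈ univ.filter (fun s : ZMod p => s ≠ 0), (p + 1) :=
    Finset.sum_lt_sum hle ⟨t, hmem, hlt⟩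
  rw [hsum, Finset.sum_const, smul_eq_mul] at hstrict
  have hcard : (univ.filter (fun s : ZMod p => s ≠ 0)).card = p - 1 := by
    rw [Finset.filter_ne', Finset.card_erase_of_mem (Finset.mem_univ _), Finset.card_univ,
      ZMod.card]
  rw [hcard] at hstrict
  have hp2 : 2 ≤ p := (Fact.out : p.Prime).two_le
  obtain ⟨m, rfl⟩ : ∃ m, p = m + 2 := ⟨p - 2, by omega⟩
  have e1 : (m + 2) ^ 2 = m ^ 2 + 4 * m + 4 := by ring
  rw [e1] at hstrict
  have e2 : (m + 2 - 1) * (m + 2 + 1) = m ^ 2 + 4 * m + 3 := by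
    have : m + 2 - 1 = m + 1 := by omega
    rw [this]; ring
  rw [e2] at hstrict
  omega

end Counting


section RmodFacts

lemma rsqZ (𝔇 : ℕ) :
    (AdjoinRoot.root ((Polynomial.X : Polynomial ℤ) ^ 2 + Polynomial.C (𝔇 : ℤ))) ^ 2
      = -((𝔇 : ℤ) : ZsqrtNeg 𝔇) := by
  have h := AdjoinRoot.mk_self (f := (Polynomial.X : Polynomial ℤ) ^ 2 + Polynomial.C (𝔇 : ℤ))
  rw [map_add, map_pow, AdjoinRoot.mk_X, AdjoinRoot.mk_C] at h
  rw [show ((AdjoinRoot.of ((Polynomial.X : Polynomial ℤ) ^ 2 + Polynomial.C (𝔇 : ℤ)))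
      ((𝔇 : ℤ)) : ZsqrtNeg 𝔇) = ((𝔇 : ℤ) : ZsqrtNeg 𝔇) from eq_intCast _ _] at h
  exact eq_neg_of_add_eq_zero_left h

noncomputable def phi0 (𝔇 p : ℕ) [Fact p.Prime] : ZsqrtNeg 𝔇 →+* FF 𝔇 p :=
  AdjoinRoot.lift (Int.castRingHom (FF 𝔇 p)) (AdjoinRoot.root (gpoly 𝔇 p)) (by
    rw [Polynomial.eval₂_add, Polynomial.eval₂_X_pow, Polynomial.eval₂_C, rsq]
    rw [eq_intCast (Int.castRingHom (FF 𝔇 p))]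
    push_cast
    ring)

noncomputable def phi (𝔇 p : ℕ) [Fact p.Prime] [Fact (Irreducible (gpoly 𝔇 p))] :
    Rmod 𝔇 p →+* FF 𝔇 p :=
  Ideal.Quotient.lift _ (phi0 𝔇 p) (by
    intro a ha
    rw [Ideal.mem_span_singleton] at ha
    obtain ⟨c, rfl⟩ := ha
    rw [map_mul]
    have h0 : (phi0 𝔇 p) ((p : ℕ) : ZsqrtNeg 𝔇) = 0 := by
      rw [map_natCast]
      haveI := charP_FF (p := p) (𝔇 := 𝔇)
      exact CharP.cast_eq_zero _ p
    rw [h0, zero_mul])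

lemma Rmod_nontrivial (𝔇 p : ℕ) [Fact p.Prime] [Fact (Irreducible (gpoly 𝔇 p))] :
    (0 : Rmod 𝔇 p) ≠ 1 := fun h =>
  one_ne_zero (α := FF 𝔇 p) (by rw [← map_one (phi 𝔇 p), ← h, map_zero])

lemma toRmod_mul (𝔇 p : ℕ) (u v u' v' : ℤ) :
    toRmod 𝔇 p u v * toRmod 𝔇 p u' v'
      = toRmod 𝔇 p (u * u' - (𝔇 : ℤ) * v * v') (u * v' + u' * v) := by
  unfold toRmod
  rw [← map_mul]
  congr 1
  have h := rsqZ 𝔇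
  push_cast at h ⊢
  linear_combination ((v : ZsqrtNeg 𝔇) * (v' : ZsqrtNeg 𝔇)) * h

lemma toRmod_congr (𝔇 p : ℕ) {u v u' v' : ℤ} (hu : (p : ℤ) ∣ u - u') (hv : (p : ℤ) ∣ v - v') :
    toRmod 𝔇 p u v = toRmod 𝔇 p u' v' := by
  unfold toRmod
  rw [Ideal.Quotient.eq, Ideal.mem_span_singleton]
  obtain ⟨s, hs⟩ := hu
  obtain ⟨t, ht⟩ := hv
  refine ⟨(s : ZsqrtNeg 𝔇) + (t : ZsqrtNeg 𝔇) * AdjoinRoot.root _, ?_⟩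
  have hsC : ((u - u' : ℤ) : ZsqrtNeg 𝔇) = (((p : ℤ) * s : ℤ) : ZsqrtNeg 𝔇) := by rw [hs]
  have htC : ((v - v' : ℤ) : ZsqrtNeg 𝔇) = (((p : ℤ) * t : ℤ) : ZsqrtNeg 𝔇) := by rw [ht]
  push_cast at hsC htC
  linear_combination hsC + (AdjoinRoot.root ((Polynomial.X : Polynomial ℤ) ^ 2
    + Polynomial.C (𝔇 : ℤ))) * htC

lemma toRmod_one (𝔇 p : ℕ) : toRmod 𝔇 p 1 0 = 1 := by
  unfold toRmod
  simp

lemma toRmod_zero (𝔇 p : ℕ) : toRmod 𝔇 p 0 0 = 0 := by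
  unfold toRmod
  simp

lemma exists_inv (𝔇 p : ℕ) [Fact p.Prime] (hns : ¬ IsSquare (-(𝔇 : ZMod p)))
    (a b : ZMod p) (hab : ¬(a = 0 ∧ b = 0)) :
    ∃ z : Rmod 𝔇 p, z * toRmod 𝔇 p (a.val : ℤ) (b.val : ℤ) = 1 := by
  set N : ZMod p := a ^ 2 + (𝔇 : ZMod p) * b ^ 2 with hN
  have hN0 : N ≠ 0 := fun h => hab (aniso hns (by rw [← hN]; exact h))
  set w : ZMod p := N⁻¹ with hwdef
  have hw : w * N = 1 := inv_mul_cancel₀ hN0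
  refine ⟨toRmod 𝔇 p ((a * w).val : ℤ) ((-(b * w)).val : ℤ), ?_⟩
  rw [toRmod_mul]
  rw [show (1 : Rmod 𝔇 p) = toRmod 𝔇 p 1 0 from (toRmod_one 𝔇 p).symm]
  apply toRmod_congr
  · rw [← ZMod.intCast_zmod_eq_zero_iff_dvd]
    push_cast [ZMod.natCast_val, ZMod.cast_id]
    linear_combination hw - w * hN
  · rw [← ZMod.intCast_zmod_eq_zero_iff_dvd]
    push_cast [ZMod.natCast_val, ZMod.cast_id]
    ring

end RmodFacts

/-- For `𝔇 ≥ 1`, an odd prime `p ∤ 𝔇` with `−𝔇` not a square mod `p`, and integers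
`x, y, n` with `p ∣ n`: the number of unimodular quadruples in `(ℤ/pℤ)⁴` satisfying the
congruence `A x² + B y² + C x + D y + E ≡ n (mod p)` equals
`p³ + p² − p − 1 = (p + 1)(p² − 1)`, and this count divided by the total number `p⁴ − 1`
of unimodular pairs equals `(p + 1)/(p² + 1)`. -/
theorem unimodular_solution_count_div (𝔇 : ℕ) (h𝔇 : 1 ≤ 𝔇) (p : ℕ) (hp : p.Prime)
    (hodd : Odd p) (hpD : ¬ p ∣ 𝔇) (hns : ¬ IsSquare (-(𝔇 : ZMod p)))
    (x y n : ℤ) (hn : (p : ℤ) ∣ n) :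
    Nat.card {v : ZMod p × ZMod p × ZMod p × ZMod p //
        IsUnimodular 𝔇 p v ∧ QuadCongr 𝔇 p x y n v} = (p + 1) * (p ^ 2 - 1) ∧
    p ^ 3 + p ^ 2 - p - 1 = (p + 1) * (p ^ 2 - 1) ∧
    (Nat.card {v : ZMod p × ZMod p × ZMod p × ZMod p //
        IsUnimodular 𝔇 p v ∧ QuadCongr 𝔇 p x y n v} : ℚ) / ((p : ℚ) ^ 4 - 1)
      = ((p : ℚ) + 1) / ((p : ℚ) ^ 2 + 1) := by
  haveI hfp : Fact p.Prime := ⟨hp⟩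
  haveI hirr : Fact (Irreducible (gpoly 𝔇 p)) := ⟨g_irred hns⟩
  classical
  set X' : ZMod p := ((x : ℤ) : ZMod p) with hX'
  set Y' : ZMod p := ((y : ℤ) : ZMod p) with hY'
  -- unimodularity is equivalent to being nonzero
  have hUiff : ∀ v : ZMod p × ZMod p × ZMod p × ZMod p, IsUnimodular 𝔇 p v ↔ v ≠ 0 := by
    intro v
    constructor
    · rintro ⟨a, b, hab⟩ rfl
      simp only [Prod.fst_zero, Prod.snd_zero, ZMod.val_zero, Nat.cast_zero, toRmod_zero,
        mul_zero, sub_zero] at hab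
      exact Rmod_nontrivial 𝔇 p hab
    · intro hv
      by_cases hd : v.2.2.1 = 0 ∧ v.2.2.2 = 0
      · have hc : ¬(v.1 = 0 ∧ v.2.1 = 0) := by
          rintro ⟨h1, h2⟩
          apply hv
          simp only [Prod.ext_iff, Prod.fst_zero, Prod.snd_zero]
          exact ⟨h1, h2, hd.1, hd.2⟩
        obtain ⟨z, hz⟩ := exists_inv 𝔇 p hns v.1 v.2.1 hc
        exact ⟨0, -z, by linear_combination hz⟩
      · obtain ⟨z, hz⟩ := exists_inv 𝔇 p hns v.2.2.1 v.2.2.2 hd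
        exact ⟨z, 0, by linear_combination hz⟩
  -- the congruence, rewritten as a sum of two "norms"
  have hn0 : ((n : ℤ) : ZMod p) = 0 := by rwa [ZMod.intCast_zmod_eq_zero_iff_dvd]
  have hQiff : ∀ v : ZMod p × ZMod p × ZMod p × ZMod p, QuadCongr 𝔇 p x y n v ↔
      v.1 ^ 2 + (𝔇 : ZMod p) * v.2.1 ^ 2
        + ((v.1 * X' - (𝔇 : ZMod p) * v.2.1 * Y' + v.2.2.1) ^ 2
          + (𝔇 : ZMod p) * (v.2.1 * X' + v.1 * Y' + v.2.2.2) ^ 2) = 0 := by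
    intro v
    unfold QuadCongr
    rw [hn0, ← hX', ← hY']
    constructor <;> intro h <;> linear_combination h
  -- change of variables
  let σ : (ZMod p × ZMod p × ZMod p × ZMod p) ≃ (ZMod p × ZMod p × ZMod p × ZMod p) :=
  { toFun := fun v => (v.1, v.2.1, v.1 * X' - (𝔇 : ZMod p) * v.2.1 * Y' + v.2.2.1,
      v.2.1 * X' + v.1 * Y' + v.2.2.2)
    invFun := fun w => (w.1, w.2.1, w.2.2.1 - (w.1 * X' - (𝔇 : ZMod p) * w.2.1 * Y'),
      w.2.2.2 - (w.2.1 * X' + w.1 * Y'))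
    left_inv := by
      rintro ⟨a, b, c, d⟩
      simp only [Prod.mk.injEq]
      exact ⟨by trivial, by trivial, by ring, by ring⟩
    right_inv := by
      rintro ⟨a, b, c, d⟩
      simp only [Prod.mk.injEq]
      exact ⟨by trivial, by trivial, by ring, by ring⟩ }
  have hc1 : ∀ v, (σ v).1 = v.1 := fun _ => rfl
  have hc2 : ∀ v, (σ v).2.1 = v.2.1 := fun _ => rfl
  have hc3 : ∀ v, (σ v).2.2.1 = v.1 * X' - (𝔇 : ZMod p) * v.2.1 * Y' + v.2.2.1 := fun _ => rfl
  have hc4 : ∀ v, (σ v).2.2.2 = v.2.1 * X' + v.1 * Y' + v.2.2.2 := fun _ => rfl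
  have hσ0 : ∀ v, σ v = 0 ↔ v = 0 := by
    rintro ⟨a, b, c, d⟩
    show (⟨a, b, a * X' - (𝔇 : ZMod p) * b * Y' + c, b * X' + a * Y' + d⟩ :
      ZMod p × ZMod p × ZMod p × ZMod p) = 0 ↔ _
    simp only [Prod.ext_iff, Prod.fst_zero, Prod.snd_zero]
    constructor
    · rintro ⟨h1, h2, h3, h4⟩
      subst h1; subst h2
      exact ⟨by trivial, by trivial, by linear_combination h3, by linear_combination h4⟩
    · rintro ⟨h1, h2, h3, h4⟩
      subst h1; subst h2; subst h3; subst h4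
      exact ⟨by trivial, by trivial, by ring, by ring⟩
  have e1 : {v : ZMod p × ZMod p × ZMod p × ZMod p //
        IsUnimodular 𝔇 p v ∧ QuadCongr 𝔇 p x y n v}
      ≃ {w : ZMod p × ZMod p × ZMod p × ZMod p //
        w ≠ 0 ∧ w.1 ^ 2 + (𝔇 : ZMod p) * w.2.1 ^ 2
          + (w.2.2.1 ^ 2 + (𝔇 : ZMod p) * w.2.2.2 ^ 2) = 0} := by
    refine Equiv.subtypeEquiv σ ?_
    intro v
    rw [hUiff, hQiff]
    constructor
    · rintro ⟨h1, h2⟩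
      refine ⟨fun h0 => h1 ((hσ0 v).mp h0), ?_⟩
      rw [hc1, hc2, hc3, hc4]
      exact h2
    · rintro ⟨h1, h2⟩
      rw [hc1, hc2, hc3, hc4] at h2
      exact ⟨fun h0 => h1 ((hσ0 v).mpr (by rw [h0])), h2⟩
  have hcount : Nat.card {v : ZMod p × ZMod p × ZMod p × ZMod p //
      IsUnimodular 𝔇 p v ∧ QuadCongr 𝔇 p x y n v} = (p ^ 2 - 1) * (p + 1) := by
    rw [Nat.card_congr e1, Nat.card_eq_fintype_card, Fintype.card_subtype]
    rw [Finset.card_eq_sum_card_fiberwise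
      (f := fun w : ZMod p × ZMod p × ZMod p × ZMod p => ((w.1, w.2.1) : ZMod p × ZMod p))
      (t := Finset.univ.filter fun c : ZMod p × ZMod p =>
        c.1 ^ 2 + (𝔇 : ZMod p) * c.2 ^ 2 ≠ 0)
      (by
        intro w hw
        simp only [Finset.mem_coe, Finset.mem_filter, Finset.mem_univ, true_and] at hw ⊢
        obtain ⟨hw0, hE⟩ := hw
        intro hc0
        obtain ⟨ha, hb⟩ := aniso hns hc0
        have hdpart : w.2.2.1 ^ 2 + (𝔇 : ZMod p) * w.2.2.2 ^ 2 = 0 := by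
          linear_combination hE - (w.1 * ha + (𝔇 : ZMod p) * w.2.1 * hb)
        obtain ⟨h3, h4⟩ := aniso hns hdpart
        apply hw0
        simp only [Prod.ext_iff, Prod.fst_zero, Prod.snd_zero]
        exact ⟨ha, hb, h3, h4⟩)]
    have hterm : ∀ c ∈ Finset.univ.filter (fun c : ZMod p × ZMod p =>
        c.1 ^ 2 + (𝔇 : ZMod p) * c.2 ^ 2 ≠ 0),
        ((Finset.univ.filter fun w : ZMod p × ZMod p × ZMod p × ZMod p =>
          (w ≠ 0 ∧ w.1 ^ 2 + (𝔇 : ZMod p) * w.2.1 ^ 2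
            + (w.2.2.1 ^ 2 + (𝔇 : ZMod p) * w.2.2.2 ^ 2) = 0)).filter
          fun w => (w.1, w.2.1) = c).card = p + 1 := by
      intro c hc
      rw [Finset.mem_filter] at hc
      have hc0 : c.1 ^ 2 + (𝔇 : ZMod p) * c.2 ^ 2 ≠ 0 := hc.2
      rw [Finset.filter_filter]
      have hbij : (Finset.univ.filter fun w : ZMod p × ZMod p × ZMod p × ZMod p =>
          (w ≠ 0 ∧ w.1 ^ 2 + (𝔇 : ZMod p) * w.2.1 ^ 2
            + (w.2.2.1 ^ 2 + (𝔇 : ZMod p) * w.2.2.2 ^ 2) = 0) ∧ (w.1, w.2.1) = c).card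
          = (Finset.univ.filter fun d : ZMod p × ZMod p =>
            d.1 ^ 2 + (𝔇 : ZMod p) * d.2 ^ 2 = -(c.1 ^ 2 + (𝔇 : ZMod p) * c.2 ^ 2)).card := by
        apply Finset.card_nbij' (i := fun w => ((w.2.2.1, w.2.2.2) : ZMod p × ZMod p))
          (j := fun d => ((c.1, c.2, d.1, d.2) : ZMod p × ZMod p × ZMod p × ZMod p))
        · intro w hw
          simp only [Finset.mem_coe, Finset.mem_filter, Finset.mem_univ, true_and] at hw ⊢
          obtain ⟨⟨hw0, hE⟩, hfst⟩ := hw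
          have h1 : w.1 = c.1 := by rw [← hfst]
          have h2 : w.2.1 = c.2 := by rw [← hfst]
          linear_combination hE - ((w.1 + c.1) * h1 + (𝔇 : ZMod p) * (w.2.1 + c.2) * h2)
        · intro d hd
          simp only [Finset.mem_coe, Finset.mem_filter, Finset.mem_univ, true_and] at hd ⊢
          refine ⟨⟨?_, by linear_combination hd⟩, by trivial⟩
          intro h0
          simp only [Prod.ext_iff, Prod.fst_zero, Prod.snd_zero] at h0
          exact hc0 (by rw [h0.1, h0.2.1]; ring)
        · intro w hw
          simp only [Finset.mem_coe, Finset.mem_filter, Finset.mem_univ, true_and] at hw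
          obtain ⟨_, hfst⟩ := hw
          have h1 : c.1 = w.1 := by rw [← hfst]
          have h2 : c.2 = w.2.1 := by rw [← hfst]
          rw [← hfst]
        · intro d _
          rfl
      rw [hbij]
      exact fiber_card hodd hns _ (neg_ne_zero.mpr hc0)
    rw [Finset.sum_congr rfl hterm, Finset.sum_const, smul_eq_mul,
      card_nu_ne_zero hns]
  refine ⟨?_, ?_, ?_⟩
  · rw [hcount]
    exact Nat.mul_comm _ _
  · have h2 : 1 ≤ p ^ 2 := Nat.one_le_pow _ _ hp.pos
    have key : p ^ 3 + p ^ 2 = (p + 1) * (p ^ 2 - 1) + (p + 1) := by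
      zify [h2]
      ring
    rw [key]
    generalize (p + 1) * (p ^ 2 - 1) = A
    omega
  · rw [hcount]
    have h2 : 1 ≤ p ^ 2 := Nat.one_le_pow _ _ hp.pos
    have hcast : (((p ^ 2 - 1) * (p + 1) : ℕ) : ℚ) = ((p : ℚ) ^ 2 - 1) * ((p : ℚ) + 1) := by
      push_cast [h2]
      ring
    rw [hcast]
    have hp2 : (2 : ℚ) ≤ (p : ℚ) := by exact_mod_cast hp.two_le
    have h4 : (p : ℚ) ^ 4 - 1 ≠ 0 := by nlinarith
    have h21 : (p : ℚ) ^ 2 + 1 ≠ 0 := by positivity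
    field_simp
    ring
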